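/- arXiv:1706.08657 — 2 statements merged into one kernel-verified Lean document; each statement's English description precedes it below -/
import Mathlib

section
/- Carleson bound for the constructed auxiliary family: let {λ_Q} be non-negative, σ and ω locally finite Borel measures, and {a_Q} a family of positive reals. Define d_Q := a_Q · sup_{R ⊇ Q} ( (1/σ(R)) ∑_{S ⊆ R} λ_S a_S^{−1} ω(S) ), assuming all these suprema are finite and positive. Then for every dyadic cube P, ∑_{Q ⊆ P} λ_Q d_Q^{−1} ω(Q) ≤ σ(P). -/
open MeasureTheory ENNReal Filter
open scoped NNReal ENNReal

/-- A dyadic cube `2^k([0,1)^d + j)` in `ℝ^d`. -/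
structure DyadicCube (d : ℕ) where
  k : ℤ
  j : Fin d → ℤ

/-- The underlying set of a dyadic cube. -/
def DyadicCube.toSet {d : ℕ} (Q : DyadicCube d) : Set (Fin d → ℝ) :=
  {x | ∀ i, (2:ℝ) ^ Q.k * (Q.j i) ≤ x i ∧ x i < (2:ℝ) ^ Q.k * (Q.j i + 1)}

/-- The collection `𝒬` of cubes contributing to the two-weight inequality:
`λ_Q > 0`, `σ(Q) > 0` and `ω(Q) > 0`. -/
def memQcal {d : ℕ} (lam : DyadicCube d → ℝ≥0) (σ ω : Measure (Fin d → ℝ))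
    (Q : DyadicCube d) : Prop :=
  0 < lam Q ∧ 0 < σ Q.toSet ∧ 0 < ω Q.toSet

namespace DyadicCube

variable {d : ℕ}

instance : Countable (DyadicCube d) :=
  Function.Injective.countable (f := fun Q : DyadicCube d => (Q.k, Q.j))
    (fun Q R h => by cases Q; cases R; simpa using h)

lemma corner_mem (Q : DyadicCube d) : (fun i => (2:ℝ) ^ Q.k * (Q.j i)) ∈ Q.toSet := by
  intro i
  refine ⟨le_refl _, ?_⟩
  have h2 : (0:ℝ) < (2:ℝ) ^ Q.k := zpow_pos (by norm_num) _
  have : (Q.j i : ℝ) < (Q.j i : ℝ) + 1 := by linarith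
  exact (mul_lt_mul_iff_right₀ h2).mpr this

lemma toSet_eq_pi (Q : DyadicCube d) :
    Q.toSet = Set.pi Set.univ
      (fun i => Set.Ico ((2:ℝ) ^ Q.k * (Q.j i)) ((2:ℝ) ^ Q.k * (Q.j i + 1))) := by
  ext x; simp [toSet, Set.mem_pi, Set.mem_Ico]

lemma measurableSet_toSet (Q : DyadicCube d) : MeasurableSet Q.toSet := by
  rw [toSet_eq_pi]
  exact MeasurableSet.univ_pi (fun i => measurableSet_Ico)

lemma measure_toSet_lt_top (μ : Measure (Fin d → ℝ)) [IsLocallyFiniteMeasure μ]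
    (Q : DyadicCube d) : μ Q.toSet < ∞ := by
  have hc : IsCompact (Set.pi Set.univ
      (fun i => Set.Icc ((2:ℝ) ^ Q.k * (Q.j i)) ((2:ℝ) ^ Q.k * (Q.j i + 1)))) :=
    isCompact_univ_pi (fun i => isCompact_Icc)
  refine lt_of_le_of_lt (measure_mono ?_) hc.measure_lt_top
  rw [toSet_eq_pi]
  exact Set.pi_mono (fun i _ => Set.Ico_subset_Icc_self)

/-- The one-dimensional dyadic interval lemma. -/
lemma interval_aux {kq kr : ℤ} (hk : kq ≤ kr) {jq m : ℤ} {x : ℝ}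
    (h1 : (2:ℝ) ^ kq * jq ≤ x) (h2 : x < (2:ℝ) ^ kq * (jq + 1))
    (h3 : (2:ℝ) ^ kr * m ≤ x) (h4 : x < (2:ℝ) ^ kr * (m + 1)) :
    (2:ℝ) ^ kr * m ≤ (2:ℝ) ^ kq * jq ∧ (2:ℝ) ^ kq * (jq + 1) ≤ (2:ℝ) ^ kr * (m + 1) := by
  set n : ℕ := (kr - kq).toNat with hn
  have hkr : kr = kq + (n : ℤ) := by omega
  have h2pos : (0:ℝ) < (2:ℝ) ^ kq := zpow_pos (by norm_num) _
  have hpow : (2:ℝ) ^ kr = (2:ℝ) ^ kq * ((2 ^ n : ℤ) : ℝ) := by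
    rw [hkr, zpow_add₀ (by norm_num : (2:ℝ) ≠ 0)]
    push_cast
    rw [zpow_natCast]
  set c : ℤ := 2 ^ n * m with hc
  have h3' : (2:ℝ) ^ kq * (c : ℝ) ≤ x := by
    rw [hc]; push_cast; rw [← mul_assoc]; rw [hpow] at h3; push_cast at h3; linarith
  have h4' : x < (2:ℝ) ^ kq * ((c : ℝ) + (2 ^ n : ℤ)) := by
    rw [hc]; push_cast; rw [hpow] at h4; push_cast at h4; nlinarith
  have hcj : c ≤ jq := by
    have : (2:ℝ) ^ kq * (c:ℝ) < (2:ℝ) ^ kq * ((jq:ℝ) + 1) := lt_of_le_of_lt h3' h2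
    have := (mul_lt_mul_iff_right₀ h2pos).mp this
    exact_mod_cast Int.lt_add_one_iff.mp (by exact_mod_cast this)
  have hjc : jq + 1 ≤ c + 2 ^ n := by
    have : (2:ℝ) ^ kq * (jq:ℝ) < (2:ℝ) ^ kq * ((c:ℝ) + (2 ^ n : ℤ)) := lt_of_le_of_lt h1 h4'
    have := (mul_lt_mul_iff_right₀ h2pos).mp this
    have : (jq:ℤ) < c + 2 ^ n := by exact_mod_cast this
    omega
  constructor
  · rw [hpow]
    calc (2:ℝ) ^ kq * ((2 ^ n : ℤ):ℝ) * (m:ℝ) = (2:ℝ) ^ kq * (c:ℝ) := by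
          rw [hc]; push_cast; ring
    _ ≤ (2:ℝ) ^ kq * (jq:ℝ) := (mul_le_mul_iff_right₀ h2pos).mpr (by exact_mod_cast hcj)
  · rw [hpow]
    calc (2:ℝ) ^ kq * ((jq:ℝ) + 1) ≤ (2:ℝ) ^ kq * ((c:ℝ) + (2^n:ℤ)) := by
          refine (mul_le_mul_iff_right₀ h2pos).mpr ?_
          have h : ((jq:ℝ) + 1) = ((jq + 1 : ℤ) : ℝ) := by push_cast; ring
          rw [h]
          exact_mod_cast hjc
    _ = (2:ℝ) ^ kq * ((2 ^ n : ℤ):ℝ) * ((m:ℝ) + 1) := by rw [hc]; push_cast; ring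

lemma subset_of_inter_nonempty {Q R : DyadicCube d}
    (h : (Q.toSet ∩ R.toSet).Nonempty) (hk : Q.k ≤ R.k) : Q.toSet ⊆ R.toSet := by
  obtain ⟨x, hxQ, hxR⟩ := h
  intro y hy i
  obtain ⟨h1, h2⟩ := hxQ i
  obtain ⟨h3, h4⟩ := hxR i
  obtain ⟨hl, hu⟩ := interval_aux hk h1 h2 h3 h4
  exact ⟨le_trans hl (hy i).1, lt_of_lt_of_le (hy i).2 hu⟩

lemma k_le_of_subset {Q R : DyadicCube d} (i0 : Fin d) (h : Q.toSet ⊆ R.toSet) :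
    Q.k ≤ R.k := by
  have h2q : (0:ℝ) < (2:ℝ) ^ Q.k := zpow_pos (by norm_num) _
  have hlt : (2:ℝ) ^ Q.k * (Q.j i0) < (2:ℝ) ^ Q.k * (Q.j i0 + 1) :=
    (mul_lt_mul_iff_right₀ h2q).mpr (by linarith)
  have hsub : Set.Ico ((2:ℝ) ^ Q.k * (Q.j i0)) ((2:ℝ) ^ Q.k * (Q.j i0 + 1)) ⊆
      Set.Ico ((2:ℝ) ^ R.k * (R.j i0)) ((2:ℝ) ^ R.k * (R.j i0 + 1)) := by
    intro t ht
    set x : Fin d → ℝ := Function.update (fun i => (2:ℝ) ^ Q.k * (Q.j i)) i0 t with hx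
    have hxQ : x ∈ Q.toSet := by
      intro i
      by_cases hi : i = i0
      · subst hi; simp only [hx, Function.update_self]; exact ⟨ht.1, ht.2⟩
      · simp only [hx, Function.update_of_ne hi]
        exact Q.corner_mem i
    have hxR := h hxQ i0
    simpa only [hx, Function.update_self, Set.mem_Ico] using hxR
  obtain ⟨hl, hu⟩ := (Set.Ico_subset_Ico_iff hlt).mp hsub
  have hlen : (2:ℝ) ^ Q.k ≤ (2:ℝ) ^ R.k := by nlinarith
  exact (zpow_le_zpow_iff_right₀ (by norm_num : (1:ℝ) < 2)).mp hlen

lemma eq_of_subset_of_k_eq {Q R : DyadicCube d} (h : Q.toSet ⊆ R.toSet)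
    (hk : Q.k = R.k) : Q = R := by
  have h2q : (0:ℝ) < (2:ℝ) ^ Q.k := zpow_pos (by norm_num) _
  have hj : Q.j = R.j := by
    funext i
    have hc := h Q.corner_mem i
    rw [← hk] at hc
    obtain ⟨h1, h2⟩ := hc
    have hle : (R.j i : ℝ) ≤ (Q.j i : ℝ) := le_of_mul_le_mul_left h1 h2q
    have hlt : (Q.j i : ℝ) < (R.j i : ℝ) + 1 := lt_of_mul_lt_mul_left h2 (le_of_lt h2q)
    have hle' : (R.j i : ℤ) ≤ Q.j i := by exact_mod_cast hle
    have hlt' : (Q.j i : ℤ) < R.j i + 1 := by exact_mod_cast hlt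
    omega
  cases Q; cases R; simp_all

lemma toSet_univ_of_dzero (hd : d = 0) (Q : DyadicCube d) : Q.toSet = Set.univ := by
  subst hd
  ext x
  simp only [toSet, Set.mem_setOf_eq, Set.mem_univ, iff_true]
  intro i
  exact absurd i.2 (by omega)

end DyadicCube

open DyadicCube in
lemma exists_maximal {d : ℕ} (lam : DyadicCube d → ℝ≥0) (σ ω : Measure (Fin d → ℝ))
    (P : DyadicCube d)
    (hne : Nonempty {Q : DyadicCube d // memQcal lam σ ω Q ∧ Q.toSet ⊆ P.toSet}) :
    ∃ M : {Q : DyadicCube d // memQcal lam σ ω Q ∧ Q.toSet ⊆ P.toSet} → DyadicCube d,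
      (∀ Q, memQcal lam σ ω (M Q)) ∧ (∀ Q, Q.1.toSet ⊆ (M Q).toSet) ∧
      (∀ Q, (M Q).toSet ⊆ P.toSet) ∧
      (∀ Q Q', M Q ≠ M Q' → Disjoint (M Q).toSet (M Q').toSet) := by
  by_cases hd : d = 0
  · obtain ⟨Q0⟩ := hne
    refine ⟨fun _ => Q0.1, fun _ => Q0.2.1, fun Q => ?_, fun Q => Q0.2.2,
      fun Q Q' h => absurd rfl h⟩
    rw [toSet_univ_of_dzero hd Q0.1]
    exact Set.subset_univ _
  · have i0 : Fin d := ⟨0, Nat.pos_of_ne_zero hd⟩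
    have hex : ∀ Q : {Q : DyadicCube d // memQcal lam σ ω Q ∧ Q.toSet ⊆ P.toSet},
        ∃ R : DyadicCube d,
          (memQcal lam σ ω R ∧ Q.1.toSet ⊆ R.toSet ∧ R.toSet ⊆ P.toSet) ∧
          (∀ R' : DyadicCube d, memQcal lam σ ω R' → Q.1.toSet ⊆ R'.toSet →
            R'.toSet ⊆ P.toSet → R'.k ≤ R.k) := by
      intro Q
      have hbdd : ∃ b : ℤ, ∀ z : ℤ,
          (∃ R : DyadicCube d, (memQcal lam σ ω R ∧ Q.1.toSet ⊆ R.toSet ∧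
            R.toSet ⊆ P.toSet) ∧ R.k = z) → z ≤ b := by
        refine ⟨P.k, fun z hz => ?_⟩
        obtain ⟨R, ⟨_, _, hRP⟩, hk⟩ := hz
        rw [← hk]
        exact k_le_of_subset i0 hRP
      have hinh : ∃ z : ℤ, ∃ R : DyadicCube d, (memQcal lam σ ω R ∧ Q.1.toSet ⊆ R.toSet ∧
          R.toSet ⊆ P.toSet) ∧ R.k = z :=
        ⟨Q.1.k, Q.1, ⟨Q.2.1, subset_rfl, Q.2.2⟩, rfl⟩
      obtain ⟨lub, ⟨R, hR, hRk⟩, hmax⟩ := Int.exists_greatest_of_bdd hbdd hinh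
      exact ⟨R, hR, fun R' h1 h2 h3 => hRk ▸ hmax R'.k ⟨R', ⟨h1, h2, h3⟩, rfl⟩⟩
    choose M hM hmax using hex
    refine ⟨M, fun Q => (hM Q).1, fun Q => (hM Q).2.1, fun Q => (hM Q).2.2, ?_⟩
    intro Q Q' hne'
    by_contra hnd
    obtain ⟨x, hx⟩ := Set.not_disjoint_iff_nonempty_inter.mp hnd
    apply hne'
    rcases le_total (M Q).k (M Q').k with hk | hk
    · have hsub : (M Q).toSet ⊆ (M Q').toSet := subset_of_inter_nonempty ⟨x, hx⟩ hk
      have hk' : (M Q').k ≤ (M Q).k :=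
        hmax Q (M Q') ((hM Q').1) (le_trans (hM Q).2.1 hsub) (hM Q').2.2
      exact eq_of_subset_of_k_eq hsub (le_antisymm hk hk')
    · have hsub : (M Q').toSet ⊆ (M Q).toSet :=
        subset_of_inter_nonempty ⟨x, Set.inter_comm _ _ ▸ hx⟩ hk
      have hk' : (M Q).k ≤ (M Q').k :=
        hmax Q' (M Q) ((hM Q).1) (le_trans (hM Q').2.1 hsub) (hM Q).2.2
      exact (eq_of_subset_of_k_eq hsub (le_antisymm hk hk')).symm

/-- Carleson bound for the constructed auxiliary family
`d_Q := a_Q · sup_{R ⊇ Q} (1/σ(R)) ∑_{S ⊆ R} λ_S a_S⁻¹ ω(S)`. -/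
theorem stmt15 (d : ℕ) (σ ω : Measure (Fin d → ℝ))
    [IsLocallyFiniteMeasure σ] [IsLocallyFiniteMeasure ω]
    (lam : DyadicCube d → ℝ≥0) (a : DyadicCube d → ℝ≥0∞)
    (ha : ∀ Q, 0 < a Q ∧ a Q < ∞)
    (dd : DyadicCube d → ℝ≥0∞)
    (hdd : ∀ Q : DyadicCube d,
      dd Q = a Q *
        ⨆ R : {R : DyadicCube d // memQcal lam σ ω R ∧ Q.toSet ⊆ R.toSet},
          (σ R.1.toSet)⁻¹ *
            ∑' S : {S : DyadicCube d // memQcal lam σ ω S ∧ S.toSet ⊆ R.1.toSet},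
              (lam S.1 : ℝ≥0∞) * (a S.1)⁻¹ * ω S.1.toSet)
    (hpos : ∀ Q : DyadicCube d, memQcal lam σ ω Q → 0 < dd Q ∧ dd Q < ∞) :
    ∀ P : DyadicCube d,
      (∑' Q : {Q : DyadicCube d // memQcal lam σ ω Q ∧ Q.toSet ⊆ P.toSet},
        (lam Q.1 : ℝ≥0∞) * (dd Q.1)⁻¹ * ω Q.1.toSet) ≤ σ P.toSet := by
  classical
  intro P
  by_cases hne : Nonempty {Q : DyadicCube d // memQcal lam σ ω Q ∧ Q.toSet ⊆ P.toSet}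
  swap
  · haveI := not_nonempty_iff.mp hne
    rw [tsum_empty]
    exact zero_le
  -- abbreviation for the local sums
  set T : DyadicCube d → ℝ≥0∞ := fun R =>
    ∑' S : {S : DyadicCube d // memQcal lam σ ω S ∧ S.toSet ⊆ R.toSet},
      (lam S.1 : ℝ≥0∞) * (a S.1)⁻¹ * ω S.1.toSet with hT
  obtain ⟨M, hM1, hM2, hM3, hM4⟩ := exists_maximal lam σ ω P hne
  have hσfin : ∀ R : DyadicCube d, σ R.toSet ≠ ∞ :=
    fun R => (DyadicCube.measure_toSet_lt_top σ R).ne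
  -- the supremum dominates the value at M Q
  have hle : ∀ Q : {Q : DyadicCube d // memQcal lam σ ω Q ∧ Q.toSet ⊆ P.toSet},
      a Q.1 * ((σ (M Q).toSet)⁻¹ * T (M Q)) ≤ dd Q.1 := by
    intro Q
    rw [hdd Q.1]
    exact mul_le_mul_right
      (le_iSup (f := fun R : {R : DyadicCube d // memQcal lam σ ω R ∧ Q.1.toSet ⊆ R.toSet} =>
        (σ R.1.toSet)⁻¹ * T R.1) ⟨M Q, hM1 Q, hM2 Q⟩) _
  have hT0 : ∀ Q : {Q : DyadicCube d // memQcal lam σ ω Q ∧ Q.toSet ⊆ P.toSet},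
      T (M Q) ≠ 0 := by
    intro Q h0
    have hterm : (lam Q.1 : ℝ≥0∞) * (a Q.1)⁻¹ * ω Q.1.toSet ≤ T (M Q) :=
      ENNReal.le_tsum (⟨Q.1, Q.2.1, hM2 Q⟩ :
        {S : DyadicCube d // memQcal lam σ ω S ∧ S.toSet ⊆ (M Q).toSet})
    rw [h0, le_zero_iff] at hterm
    have h1 : (lam Q.1 : ℝ≥0∞) ≠ 0 := by
      simpa using Q.2.1.1.ne'
    have h2 : (a Q.1)⁻¹ ≠ 0 := ENNReal.inv_ne_zero.mpr (ha Q.1).2.ne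
    have h3 : ω Q.1.toSet ≠ 0 := Q.2.1.2.2.ne'
    exact (mul_ne_zero (mul_ne_zero h1 h2) h3) hterm
  have hTfin : ∀ Q : {Q : DyadicCube d // memQcal lam σ ω Q ∧ Q.toSet ⊆ P.toSet},
      T (M Q) ≠ ∞ := by
    intro Q htop
    have hinv0 : (σ (M Q).toSet)⁻¹ ≠ 0 := ENNReal.inv_ne_zero.mpr (hσfin (M Q))
    have : a Q.1 * ((σ (M Q).toSet)⁻¹ * T (M Q)) = ∞ := by
      rw [htop, ENNReal.mul_top hinv0, ENNReal.mul_top (ha Q.1).1.ne']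
    exact (hpos Q.1 Q.2.1).2.ne (top_le_iff.mp (this ▸ hle Q))
  -- pointwise bound
  have key : ∀ Q : {Q : DyadicCube d // memQcal lam σ ω Q ∧ Q.toSet ⊆ P.toSet},
      (lam Q.1 : ℝ≥0∞) * (dd Q.1)⁻¹ * ω Q.1.toSet ≤
        ((lam Q.1 : ℝ≥0∞) * (a Q.1)⁻¹ * ω Q.1.toSet) *
          (σ (M Q).toSet * (T (M Q))⁻¹) := by
    intro Q
    have hinv : (dd Q.1)⁻¹ ≤ (a Q.1)⁻¹ * (σ (M Q).toSet * (T (M Q))⁻¹) := by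
      have h1 : (a Q.1 * ((σ (M Q).toSet)⁻¹ * T (M Q)))⁻¹ =
          (a Q.1)⁻¹ * (σ (M Q).toSet * (T (M Q))⁻¹) := by
        rw [ENNReal.mul_inv (Or.inl (ha Q.1).1.ne') (Or.inl (ha Q.1).2.ne),
          ENNReal.mul_inv (Or.inl (ENNReal.inv_ne_zero.mpr (hσfin (M Q))))
            (Or.inr (hT0 Q)), inv_inv]
    /- end of h1 -/
      rw [← h1]
      exact ENNReal.inv_le_inv' (hle Q)
    calc (lam Q.1 : ℝ≥0∞) * (dd Q.1)⁻¹ * ω Q.1.toSet ≤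
        (lam Q.1 : ℝ≥0∞) * ((a Q.1)⁻¹ * (σ (M Q).toSet * (T (M Q))⁻¹)) * ω Q.1.toSet := by
          exact mul_le_mul' (mul_le_mul' le_rfl hinv) le_rfl
    _ = ((lam Q.1 : ℝ≥0∞) * (a Q.1)⁻¹ * ω Q.1.toSet) *
          (σ (M Q).toSet * (T (M Q))⁻¹) := by ring
  refine le_trans (ENNReal.tsum_le_tsum key) ?_
  -- regroup by the fibers of M
  rw [← (Equiv.sigmaFiberEquiv M).tsum_eq, ENNReal.tsum_sigma']
  -- bound each fiber sum by σ of the maximal cube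
  have fib : ∀ R : DyadicCube d,
      (∑' Q : {Q : {Q : DyadicCube d // memQcal lam σ ω Q ∧ Q.toSet ⊆ P.toSet} // M Q = R},
        ((lam Q.1.1 : ℝ≥0∞) * (a Q.1.1)⁻¹ * ω Q.1.1.toSet) *
          (σ (M Q.1).toSet * (T (M Q.1))⁻¹)) ≤
        Set.indicator (Set.range M) (fun R => σ R.toSet) R := by
    intro R
    by_cases hfib : ∃ Q, M Q = R
    swap
    · haveI : IsEmpty {Q : {Q : DyadicCube d // memQcal lam σ ω Q ∧ Q.toSet ⊆ P.toSet} //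
          M Q = R} := ⟨fun Q => hfib ⟨Q.1, Q.2⟩⟩
      rw [tsum_empty]
      exact zero_le
    obtain ⟨Q0, hQ0⟩ := hfib
    rw [Set.indicator_of_mem (Set.mem_range.mpr ⟨Q0, hQ0⟩)]
    have step1 : (∑' Q : {Q : {Q : DyadicCube d // memQcal lam σ ω Q ∧ Q.toSet ⊆ P.toSet} //
          M Q = R},
        ((lam Q.1.1 : ℝ≥0∞) * (a Q.1.1)⁻¹ * ω Q.1.1.toSet) *
          (σ (M Q.1).toSet * (T (M Q.1))⁻¹)) =
        (∑' Q : {Q : {Q : DyadicCube d // memQcal lam σ ω Q ∧ Q.toSet ⊆ P.toSet} //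
          M Q = R},
          ((lam Q.1.1 : ℝ≥0∞) * (a Q.1.1)⁻¹ * ω Q.1.1.toSet)) * (σ R.toSet * (T R)⁻¹) := by
      rw [← ENNReal.tsum_mul_right]
      exact tsum_congr (fun Q => by rw [Q.2])
    rw [step1]
    have step2 : (∑' Q : {Q : {Q : DyadicCube d // memQcal lam σ ω Q ∧ Q.toSet ⊆ P.toSet} //
          M Q = R},
          ((lam Q.1.1 : ℝ≥0∞) * (a Q.1.1)⁻¹ * ω Q.1.1.toSet)) ≤ T R := by
      have hι : Function.Injective
          (fun Q : {Q : {Q : DyadicCube d // memQcal lam σ ω Q ∧ Q.toSet ⊆ P.toSet} //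
            M Q = R} =>
            (⟨Q.1.1, Q.1.2.1, by have h2 := hM2 Q.1; rw [Q.2] at h2; exact h2⟩ :
              {S : DyadicCube d // memQcal lam σ ω S ∧ S.toSet ⊆ R.toSet})) := by
        intro x y h
        have h' : (x.1.1 : DyadicCube d) = y.1.1 := by simpa using h
        exact Subtype.ext (Subtype.ext h')
      exact ENNReal.tsum_comp_le_tsum_of_injective hι
        (fun S : {S : DyadicCube d // memQcal lam σ ω S ∧ S.toSet ⊆ R.toSet} =>
          (lam S.1 : ℝ≥0∞) * (a S.1)⁻¹ * ω S.1.toSet)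
    calc (∑' Q : {Q : {Q : DyadicCube d // memQcal lam σ ω Q ∧ Q.toSet ⊆ P.toSet} //
          M Q = R},
          ((lam Q.1.1 : ℝ≥0∞) * (a Q.1.1)⁻¹ * ω Q.1.1.toSet)) * (σ R.toSet * (T R)⁻¹) ≤
        T R * (σ R.toSet * (T R)⁻¹) := mul_le_mul' step2 le_rfl
    _ = σ R.toSet * (T R * (T R)⁻¹) := by ring
    _ = σ R.toSet := by
        rw [ENNReal.mul_inv_cancel (hQ0 ▸ hT0 Q0) (hQ0 ▸ hTfin Q0), mul_one]
  refine le_trans (ENNReal.tsum_le_tsum fib) ?_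
  rw [← tsum_subtype (Set.range M) (fun R => σ R.toSet)]
  have hdisj : Pairwise (Function.onFun Disjoint
      (fun R : ↥(Set.range M) => R.1.toSet)) := by
    intro R R' hRR'
    obtain ⟨Q, hQ⟩ := R.2
    obtain ⟨Q', hQ'⟩ := R'.2
    have : M Q ≠ M Q' := by
      rw [hQ, hQ']
      exact fun h => hRR' (Subtype.ext h)
    have := hM4 Q Q' this
    rwa [hQ, hQ'] at this
  rw [← MeasureTheory.measure_iUnion hdisj (fun R => DyadicCube.measurableSet_toSet R.1)]
  refine measure_mono (Set.iUnion_subset ?_)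
  rintro ⟨R, Q, hQ⟩
  simpa [← hQ] using hM3 Q
end

section
/- Counterexample to necessity of the Wolff condition for γ = q: for every 0 < q < 1 < p < ∞ there exist sequences λ_j ≥ 0 and ω_j > 0 (j ≥ 0) such that, with W_j := ∑_{k=0}^j ω_k, one has ∑_{j=0}^∞ λ_j^q W_j < ∞ but ∑_{j=0}^∞ (ω_j / W_j)(λ_j^q W_j)^{(p−1)/(p−q)} = ∞. Concretely, for any β > 1 with β(p−1)/(p−q) < 1, the choice ω_j := 2^{j+1} and λ_j^q W_j := (j+1)^{−β} works. -/
open MeasureTheory ENNReal Filter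
open scoped NNReal ENNReal

/-- counterexample to necessity of the Wolff condition for `γ = q`:
for `0 < q < 1 < p` there are sequences `λ_j ≥ 0`, `ω_j > 0` such that, with
`W_j := ∑_{k≤j} ω_k`, `∑_j λ_j^q W_j < ∞` but
`∑_j (ω_j/W_j)(λ_j^q W_j)^{(p−1)/(p−q)} = ∞`. -/
theorem stmt18 (p q : ℝ) (hq0 : 0 < q) (hq1 : q < 1) (hp : 1 < p) :
    ∃ lam w : ℕ → ℝ, (∀ j, 0 ≤ lam j) ∧ (∀ j, 0 < w j) ∧
      (∑' j : ℕ, ENNReal.ofReal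
          (lam j ^ q * ∑ k ∈ Finset.range (j + 1), w k)) < ∞ ∧
      (∑' j : ℕ, ENNReal.ofReal
          ((w j / ∑ k ∈ Finset.range (j + 1), w k) *
            (lam j ^ q * ∑ k ∈ Finset.range (j + 1), w k) ^ ((p - 1) / (p - q)))) = ∞ := by
  set α : ℝ := (p - 1) / (p - q) with hα
  have hpq : 0 < p - q := by linarith
  have hα0 : 0 < α := div_pos (by linarith) hpq
  have hα1 : α < 1 := (div_lt_one hpq).2 (by linarith)
  set β : ℝ := (1 + 1/α) / 2 with hβ
  have h1α : 1 < 1/α := one_lt_one_div hα0 hα1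
  have hβ1 : 1 < β := by rw [hβ]; linarith
  have hβα : β * α < 1 := by
    have : β * α = (α + 1) / 2 := by
      rw [hβ, div_mul_eq_mul_div, add_mul, one_div_mul_cancel hα0.ne', one_mul]
    rw [this]; linarith
  -- the weight
  set w : ℕ → ℝ := fun k => 2 ^ (k + 1) with hw
  have hWval : ∀ j : ℕ, ∑ k ∈ Finset.range (j + 1), w k = 2 ^ (j + 2) - 2 := by
    intro j
    induction j with
    | zero => simp [hw]; norm_num
    | succ n ih => rw [Finset.sum_range_succ, ih, hw]; ring
  have hWpos : ∀ j : ℕ, (0:ℝ) < ∑ k ∈ Finset.range (j + 1), w k := by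
    intro j
    rw [hWval j]
    have : (4:ℝ) ≤ 2 ^ (j + 2) := by
      calc (4:ℝ) = 2 ^ 2 := by norm_num
      _ ≤ 2 ^ (j + 2) := by
        apply pow_le_pow_right₀ (by norm_num) (by omega)
    linarith
  set lam : ℕ → ℝ := fun j => (((j:ℝ)+1) ^ (-β) / (2 ^ (j + 2) - 2)) ^ (1/q) with hlam
  have hbase : ∀ j : ℕ, (0:ℝ) ≤ ((j:ℝ)+1) ^ (-β) / (2 ^ (j + 2) - 2) := by
    intro j
    apply div_nonneg (Real.rpow_nonneg (by positivity) _)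
    have := hWpos j; rw [hWval j] at this; linarith
  have hlam0 : ∀ j, 0 ≤ lam j := fun j => Real.rpow_nonneg (hbase j) _
  -- key computation : lam j ^ q * W j = (j+1)^(-β)
  have hkey : ∀ j : ℕ, lam j ^ q * ∑ k ∈ Finset.range (j + 1), w k
      = ((j:ℝ)+1) ^ (-β) := by
    intro j
    have hWne : (2:ℝ) ^ (j + 2) - 2 ≠ 0 := by
      have := hWpos j; rw [hWval j] at this; linarith
    rw [hWval j, hlam]
    have : ((((j:ℝ)+1) ^ (-β) / (2 ^ (j + 2) - 2)) ^ (1/q)) ^ q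
        = ((j:ℝ)+1) ^ (-β) / (2 ^ (j + 2) - 2) := by
      rw [← Real.rpow_mul (hbase j), one_div_mul_cancel hq0.ne', Real.rpow_one]
    rw [this, div_mul_cancel₀ _ hWne]
  refine ⟨lam, w, hlam0, fun j => by positivity, ?_, ?_⟩
  · -- convergent sum
    have hnn : ∀ j : ℕ, (0:ℝ) ≤ ((j:ℝ)+1) ^ (-β) := fun j => Real.rpow_nonneg (by positivity) _
    have hsum : Summable (fun j : ℕ => ((j:ℝ)+1) ^ (-β)) := by
      have h0 : Summable (fun n : ℕ => (n:ℝ) ^ (-β)) :=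
        Real.summable_nat_rpow.2 (by linarith)
      have := (summable_nat_add_iff 1).2 h0
      refine this.congr fun n => ?_
      push_cast; ring_nf
    simp_rw [hkey]
    rw [← ENNReal.ofReal_tsum_of_nonneg hnn hsum]
    exact ENNReal.ofReal_lt_top
  · -- divergent sum
    by_contra h
    have hfin : Summable (fun j : ℕ =>
        (w j / ∑ k ∈ Finset.range (j + 1), w k) *
          (lam j ^ q * ∑ k ∈ Finset.range (j + 1), w k) ^ α) := by
      have hs := ENNReal.summable_toReal h
      refine hs.congr fun j => ?_
      rw [ENNReal.toReal_ofReal]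
      apply mul_nonneg
      · exact div_nonneg (by positivity) (hWpos j).le
      · exact Real.rpow_nonneg (by rw [hkey j]; exact Real.rpow_nonneg (by positivity) _) _
    -- lower bound
    have hlb : ∀ j : ℕ, (1/2 : ℝ) * ((j:ℝ)+1) ^ (-(β*α)) ≤
        (w j / ∑ k ∈ Finset.range (j + 1), w k) *
          (lam j ^ q * ∑ k ∈ Finset.range (j + 1), w k) ^ α := by
      intro j
      have h2 : (1/2 : ℝ) ≤ w j / ∑ k ∈ Finset.range (j + 1), w k := by
        rw [le_div_iff₀ (hWpos j), hWval j, hw]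
        have : (2:ℝ) ^ (j + 2) = 2 * 2 ^ (j+1) := by ring
        rw [this]; linarith
      have h3 : (lam j ^ q * ∑ k ∈ Finset.range (j + 1), w k) ^ α
          = ((j:ℝ)+1) ^ (-(β*α)) := by
        rw [hkey j, ← Real.rpow_mul (by positivity), neg_mul]
      rw [h3]
      apply mul_le_mul_of_nonneg_right h2 (Real.rpow_nonneg (by positivity) _)
    have hsum2 : Summable (fun j : ℕ => (1/2 : ℝ) * ((j:ℝ)+1) ^ (-(β*α))) :=
      Summable.of_nonneg_of_le (fun j => by positivity) hlb hfin
    have hsum3 : Summable (fun j : ℕ => ((j:ℝ)+1) ^ (-(β*α))) := by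
      have := hsum2.mul_left 2
      refine this.congr fun j => ?_
      ring
    have hsum4 : Summable (fun n : ℕ => (n:ℝ) ^ (-(β*α))) := by
      rw [← summable_nat_add_iff 1]
      refine hsum3.congr fun n => ?_
      push_cast; ring_nf
    have := Real.summable_nat_rpow.1 hsum4
    have hβα0 : 0 < β * α := mul_pos (by linarith) hα0
    linarith
end
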